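/- Let R be a ring, 𝔓 a proper ideal, M an R-module, and u ∈ M such that both M and M/Ru are (R∖∖𝔓)-pseudoflat. Let R' be a flat R-algebra and y_1,…,y_d ∈ R' whose images form a possibly improper regular sequence on R'/𝔓R'. Then the annihilator in R' of the class [u ⊗ 1; y] of u in H^d_{(y)}(M ⊗_R R') equals Ann_R(u)·R' + (y_1,…,y_d)R'. -/

import Mathlib

/-!
STATEMENT 10.  `𝔓` a proper ideal of `R`, `M` an `R`-module, `u ∈ M` with `M`
and `M/Ru` both `(R∖∖𝔓)`-pseudoflat, `R'` a flat `R`-algebra, and `y₁,…,y_d`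
elements of `R'` whose images form a possibly improper (weakly) regular
sequence on `R'/𝔓R'`.  Then the annihilator in `R'` of the class
`[u ⊗ 1; y] ∈ H^d_{(y)}(M ⊗_R R')` equals `Ann_R(u)·R' + (y₁,…,y_d)R'`.
Here `H^d_{(y)}(N) = colim_t N/(y₁ᵗ,…,y_dᵗ)N` with transition maps given by
multiplication by `y₁⋯y_d`, so `r` annihilates `[u⊗1; y]` iff for some `t`,
`((y₁⋯y_d)ᵗ · r) • (1 ⊗ u) ∈ (y₁^{t+1},…,y_d^{t+1})·(R' ⊗_R M)`.
-/

open scoped TensorProduct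

universe u

/-- `(R∖∖𝔓)`-pseudoflat. -/
def Pseudoflat {R : Type u} [CommRing R] (𝔓 : Ideal R)
    (N : Type u) [AddCommGroup N] [Module R N] : Prop :=
  ∀ (R' : Type u) [CommRing R'] [Algebra R R'], Module.Flat R R' →
    ∀ ys : List R',
      RingTheory.Sequence.IsWeaklyRegular (R' ⧸ 𝔓.map (algebraMap R R')) ys →
      RingTheory.Sequence.IsWeaklyRegular (R' ⊗[R] N) ys

section RegularHelpers

open RingTheory.Sequence Submodule

universe v w

variable {S : Type v} [CommRing S] {N : Type w} [AddCommGroup N] [Module S N]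

lemma reg_elem {I : Ideal S} {r : S}
    (h : IsSMulRegular (N ⧸ (I • ⊤ : Submodule S N)) r) {m : N}
    (hm : r • m ∈ (I • ⊤ : Submodule S N)) : m ∈ (I • ⊤ : Submodule S N) := by
  have h0 : r • (Submodule.Quotient.mk m : N ⧸ (I • ⊤ : Submodule S N))
      = r • (0 : N ⧸ (I • ⊤ : Submodule S N)) := by
    rw [smul_zero, ← Submodule.Quotient.mk_smul, Submodule.Quotient.mk_eq_zero]
    exact hm
  have := h h0
  rwa [Submodule.Quotient.mk_eq_zero] at this

lemma reg_of_elem {I : Ideal S} {r : S}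
    (h : ∀ m : N, r • m ∈ (I • ⊤ : Submodule S N) → m ∈ (I • ⊤ : Submodule S N)) :
    IsSMulRegular (N ⧸ (I • ⊤ : Submodule S N)) r := by
  intro x y hxy
  obtain ⟨a, rfl⟩ := Submodule.mkQ_surjective _ x
  obtain ⟨b, rfl⟩ := Submodule.mkQ_surjective _ y
  simp only [Submodule.mkQ_apply] at hxy ⊢
  have hmem : r • (a - b) ∈ (I • ⊤ : Submodule S N) := by
    rw [← Submodule.Quotient.mk_eq_zero (I • ⊤), Submodule.Quotient.mk_smul,
      Submodule.Quotient.mk_sub, smul_sub, hxy, sub_self]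
  have := h _ hmem
  rw [← sub_eq_zero, ← Submodule.Quotient.mk_sub, Submodule.Quotient.mk_eq_zero]
  exact this

lemma wr_prefix {l₁ l₂ : List S} (h : IsWeaklyRegular N (l₁ ++ l₂)) :
    IsWeaklyRegular N l₁ :=
  ((isWeaklyRegular_append_iff N l₁ l₂).mp h).1

lemma mem_ofList {l : List S} {a : S} (h : a ∈ l) : a ∈ Ideal.ofList l :=
  Ideal.subset_span h

lemma regMod_last {l : List S} {z : S} (h : IsWeaklyRegular N (l ++ [z])) :
    ∀ m : N, z • m ∈ (Ideal.ofList l • ⊤ : Submodule S N) →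
      m ∈ (Ideal.ofList l • ⊤ : Submodule S N) := by
  intro m hm
  have h2 := ((isWeaklyRegular_append_iff N l [z]).mp h).2
  have h3 : IsSMulRegular (N ⧸ (Ideal.ofList l • ⊤ : Submodule S N)) z :=
    (isWeaklyRegular_singleton_iff _ z).mp h2
  exact reg_elem h3 hm

lemma regMod_take {rs : List S} (h : IsWeaklyRegular N rs) {j : ℕ} (hj : j < rs.length) :
    ∀ m : N, rs[j] • m ∈ (Ideal.ofList (rs.take j) • ⊤ : Submodule S N) →
      m ∈ (Ideal.ofList (rs.take j) • ⊤ : Submodule S N) := by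
  apply regMod_last
  apply wr_prefix (l₂ := rs.drop (j+1))
  rw [List.take_concat_get', List.take_append_drop]
  exact h

lemma mem_span_singleton_smul_top {z : S} {x : N} :
    x ∈ (Ideal.span {z} • ⊤ : Submodule S N) ↔ ∃ c : N, x = z • c := by
  constructor
  · intro hx
    refine Submodule.smul_induction_on hx ?_ ?_
    · intro r hr n _
      obtain ⟨c, rfl⟩ := Ideal.mem_span_singleton'.mp hr
      exact ⟨c • n, by rw [mul_smul, smul_comm]⟩
    · rintro x y ⟨c, rfl⟩ ⟨d, rfl⟩; exact ⟨c + d, (smul_add _ _ _).symm⟩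
  · rintro ⟨c, rfl⟩
    exact Submodule.smul_mem_smul (Ideal.mem_span_singleton_self z) Submodule.mem_top

lemma mem_cons_smul_iff {z : S} {l : List S} {x : N} :
    x ∈ (Ideal.ofList (z :: l) • ⊤ : Submodule S N) ↔
      ∃ c : N, x - z • c ∈ (Ideal.ofList l • ⊤ : Submodule S N) := by
  rw [Ideal.ofList_cons, Submodule.sup_smul]
  constructor
  · intro hx
    obtain ⟨a, ha, b, hb, rfl⟩ := Submodule.mem_sup.mp hx
    obtain ⟨c, rfl⟩ := mem_span_singleton_smul_top.mp ha
    exact ⟨c, by simpa using hb⟩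
  · rintro ⟨c, hc⟩
    have h1 : z • c ∈ (Ideal.span {z} • ⊤ : Submodule S N) :=
      mem_span_singleton_smul_top.mpr ⟨c, rfl⟩
    have := Submodule.add_mem_sup h1 hc
    simpa using this

lemma mem_append_singleton_smul_iff {z : S} {l : List S} {x : N} :
    x ∈ (Ideal.ofList (l ++ [z]) • ⊤ : Submodule S N) ↔
      ∃ c : N, x - z • c ∈ (Ideal.ofList l • ⊤ : Submodule S N) := by
  have h : Ideal.ofList (l ++ [z]) = Ideal.ofList (z :: l) := by
    rw [Ideal.ofList_append, Ideal.ofList_singleton, Ideal.ofList_cons, sup_comm]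
  rw [h]; exact mem_cons_smul_iff

lemma ofList_smul_mono {l₁ l₂ : List S} (h : ∀ a, a ∈ l₁ → a ∈ l₂) {x : N}
    (hx : x ∈ (Ideal.ofList l₁ • ⊤ : Submodule S N)) :
    x ∈ (Ideal.ofList l₂ • ⊤ : Submodule S N) :=
  Submodule.smul_mono_left (Ideal.span_mono h) hx

lemma map_mem_smul_top {N₂ : Type*} [AddCommGroup N₂] [Module S N₂] (φ : N →ₗ[S] N₂)
    {I : Ideal S} {x : N} (hx : x ∈ (I • ⊤ : Submodule S N)) :
    φ x ∈ (I • ⊤ : Submodule S N₂) := by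
  refine Submodule.smul_induction_on hx ?_ ?_
  · intro r hr n _
    rw [map_smul]; exact Submodule.smul_mem_smul hr Submodule.mem_top
  · intro a b ha hb; rw [map_add]; exact Submodule.add_mem _ ha hb

lemma mkQ_mem_smul_top_iff {K : Submodule S N} {I : Ideal S} {x : N} :
    K.mkQ x ∈ (I • ⊤ : Submodule S (N ⧸ K)) ↔ x ∈ (I • ⊤ : Submodule S N) ⊔ K := by
  have h1 : (I • ⊤ : Submodule S (N ⧸ K)) = Submodule.map K.mkQ (I • ⊤ : Submodule S N) := by
    rw [Submodule.map_smul'', Submodule.map_top, Submodule.range_mkQ]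
  rw [h1, ← Submodule.mem_comap, Submodule.comap_map_eq, Submodule.ker_mkQ]


lemma rel_first {z : S} : ∀ (l : List S), IsWeaklyRegular N (z :: l) →
    ∀ w : N, z • w ∈ (Ideal.ofList l • ⊤ : Submodule S N) →
      w ∈ (Ideal.ofList (z :: l) • ⊤ : Submodule S N) := by
  intro l
  induction l using List.reverseRecOn with
  | nil =>
    intro h w hw
    have hz : IsSMulRegular N z := ((isWeaklyRegular_cons_iff N z []).mp h).1
    have h0 : z • w = 0 := by simpa using hw
    have hw0 : w = 0 := hz (show z • w = z • (0:N) by rw [h0, smul_zero])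
    rw [hw0]; exact Submodule.zero_mem _
  | append_singleton l' c ih =>
    intro h w hw
    obtain ⟨v, hv⟩ := mem_append_singleton_smul_iff.mp hw
    have hzw : z • w ∈ (Ideal.ofList (z :: l') • ⊤ : Submodule S N) :=
      Submodule.smul_mem_smul (mem_ofList (List.mem_cons_self (a := z) (l := l'))) Submodule.mem_top
    have hsub : z • w - c • v ∈ (Ideal.ofList (z :: l') • ⊤ : Submodule S N) :=
      ofList_smul_mono (fun a ha => List.mem_cons_of_mem z ha) hv
    have hcv : c • v ∈ (Ideal.ofList (z :: l') • ⊤ : Submodule S N) := by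
      have := Submodule.sub_mem _ hzw hsub
      simpa using this
    have hwr' : IsWeaklyRegular N ((z :: l') ++ [c]) := by
      rw [List.cons_append]; exact h
    have hv2 := regMod_last hwr' v hcv
    obtain ⟨e, he⟩ := mem_cons_smul_iff.mp hv2
    have hkey : z • (w - c • e) ∈ (Ideal.ofList l' • ⊤ : Submodule S N) := by
      have heq : z • (w - c • e) = (z • w - c • v) + c • (v - z • e) := by
        rw [smul_sub, smul_sub, smul_comm z c e]; abel
      rw [heq]
      exact Submodule.add_mem _ hv (Submodule.smul_mem _ c he)
    have hwr'' : IsWeaklyRegular N (z :: l') := wr_prefix (l₂ := [c]) hwr'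
    have hfin := ih hwr'' _ hkey
    have h1 : w = (w - c • e) + c • e := by abel
    rw [h1]
    refine Submodule.add_mem _ ?_ ?_
    · refine ofList_smul_mono ?_ hfin
      intro a ha
      rcases List.mem_cons.mp ha with h' | h'
      · exact h' ▸ List.mem_cons_self
      · exact List.mem_cons_of_mem _ (List.mem_append_left _ h')
    · refine Submodule.smul_mem_smul (mem_ofList ?_) Submodule.mem_top
      exact List.mem_cons_of_mem _ (List.mem_append_right _ (List.mem_singleton_self c))

lemma pow_first {z : S} {l : List S} (h : IsWeaklyRegular N (z :: l)) :
    ∀ b : ℕ, IsWeaklyRegular N (z ^ (b + 1) :: l) := by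
  intro b
  induction b with
  | zero => simpa [pow_one] using h
  | succ a ih =>
    rw [isWeaklyRegular_iff]
    intro i hi
    cases i with
    | zero =>
      simp only [List.take_zero, List.getElem_cons_zero]
      apply reg_of_elem
      intro m hm
      have hz : IsSMulRegular N (z ^ (a + 1 + 1)) :=
        (((isWeaklyRegular_cons_iff N z l).mp h).1).pow _
      simp only [Ideal.ofList_nil, bot_smul, Submodule.mem_bot] at hm ⊢
      exact hz (show z ^ (a+1+1) • m = z ^ (a+1+1) • (0:N) by rw [hm, smul_zero])
    | succ j =>
      have hj : j < l.length := by simpa using hi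
      simp only [List.take_succ_cons, List.getElem_cons_succ]
      apply reg_of_elem
      intro m hm
      obtain ⟨c, hc⟩ := mem_cons_smul_iff.mp hm
      -- Step 1
      have hs1 : l[j] • m ∈ (Ideal.ofList (z ^ (a+1) :: l.take j) • ⊤ : Submodule S N) := by
        have h1 : l[j] • m = z ^ (a+1) • (z • c) + (l[j] • m - z ^ (a+1+1) • c) := by
          rw [← mul_smul, ← pow_succ]; abel
        rw [h1]
        refine Submodule.add_mem _ ?_
          (ofList_smul_mono (fun b hb => List.mem_cons_of_mem _ hb) hc)
        exact Submodule.smul_mem_smul (mem_ofList List.mem_cons_self) Submodule.mem_top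
      -- Step 2
      have hs2 := regMod_take (rs := z ^ (a+1) :: l) ih (j := j+1) (by simpa using hj) m hs1
      obtain ⟨v, hv⟩ := mem_cons_smul_iff.mp hs2
      -- Step 3
      have hs3 : z ^ (a+1) • (l[j] • v - z • c) ∈ (Ideal.ofList (l.take j) • ⊤ : Submodule S N) := by
        have h2 : z ^ (a+1) • (l[j] • v - z • c)
            = (l[j] • m - z ^ (a+1+1) • c) - l[j] • (m - z ^ (a+1) • v) := by
          rw [smul_sub, smul_sub, smul_comm (z ^ (a+1)) l[j] v,
            ← mul_smul (z ^ (a+1)) z c, ← pow_succ]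
          abel
        rw [h2]
        exact Submodule.sub_mem _ hc (Submodule.smul_mem _ _ hv)
      -- Step 4
      have hwrT : IsWeaklyRegular N (z ^ (a+1) :: l.take j) := by
        apply wr_prefix (l₂ := l.drop j)
        rw [List.cons_append, List.take_append_drop]
        exact ih
      have hs4 := rel_first (l.take j) hwrT _ hs3
      obtain ⟨e, he⟩ := mem_cons_smul_iff.mp hs4
      -- Step 5
      have hs5 : l[j] • v ∈ (Ideal.ofList (z :: l.take j) • ⊤ : Submodule S N) := by
        refine mem_cons_smul_iff.mpr ⟨c + z ^ a • e, ?_⟩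
        have h3 : l[j] • v - z • (c + z ^ a • e) = (l[j] • v - z • c) - z ^ (a+1) • e := by
          rw [smul_add, ← mul_smul z (z ^ a) e, ← pow_succ']; abel
        rw [h3]; exact he
      -- Step 6
      have hs6 := regMod_take (rs := z :: l) h (j := j+1) (by simpa using hj) v hs5
      obtain ⟨p, hp⟩ := mem_cons_smul_iff.mp hs6
      -- Step 7
      refine mem_cons_smul_iff.mpr ⟨p, ?_⟩
      have h4 : m - z ^ (a+1+1) • p = (m - z ^ (a+1) • v) + z ^ (a+1) • (v - z • p) := by
        rw [smul_sub, ← mul_smul (z ^ (a+1)) z p, ← pow_succ]; abel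
      rw [h4]
      exact Submodule.add_mem _ hv (Submodule.smul_mem _ _ hp)


lemma lemA {Q : Type*} [AddCommGroup Q] [Module S Q] :
    ∀ (rs : List S) (π : N →ₗ[S] Q), Function.Surjective π →
      IsWeaklyRegular Q rs → ∀ a : N, π a = 0 →
      a ∈ (Ideal.ofList rs • ⊤ : Submodule S N) →
      a ∈ Ideal.ofList rs • (LinearMap.ker π) := by
  intro rs
  induction rs using List.reverseRecOn with
  | nil => intro π hsurj hQ a ha hmem; simpa using hmem
  | append_singleton l z ih =>
    intro π hsurj hQ a ha hmem
    obtain ⟨c, hc⟩ := mem_append_singleton_smul_iff.mp hmem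
    have hπc : z • π c ∈ (Ideal.ofList l • ⊤ : Submodule S Q) := by
      have h1 := map_mem_smul_top π hc
      have h2 : z • π c = -(π (a - z • c)) := by
        rw [map_sub, ha, zero_sub, map_smul, neg_neg]
      rw [h2]; exact Submodule.neg_mem _ h1
    have hQc := regMod_last hQ (π c) hπc
    have hmapeq : (Ideal.ofList l • ⊤ : Submodule S Q)
        = Submodule.map π (Ideal.ofList l • ⊤ : Submodule S N) := by
      rw [Submodule.map_smul'', Submodule.map_top, LinearMap.range_eq_top.mpr hsurj]
    rw [hmapeq] at hQc
    obtain ⟨c', hc', hπcc⟩ := hQc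
    have hker : c - c' ∈ LinearMap.ker π := by
      rw [LinearMap.mem_ker, map_sub, hπcc, sub_self]
    have ha' : π (a - z • (c - c')) = 0 := by
      rw [map_sub, ha, map_smul, LinearMap.mem_ker.mp hker, smul_zero, sub_zero]
    have hmem' : a - z • (c - c') ∈ (Ideal.ofList l • ⊤ : Submodule S N) := by
      have e : a - z • (c - c') = (a - z • c) + z • c' := by rw [smul_sub]; abel
      rw [e]; exact Submodule.add_mem _ hc (Submodule.smul_mem _ _ hc')
    have hwrl := wr_prefix (l₂ := [z]) hQ
    have hIH := ih π hsurj hwrl _ ha' hmem'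
    have e2 : a = (a - z • (c - c')) + z • (c - c') := by abel
    rw [e2]
    refine Submodule.add_mem _ ?_
      (Submodule.smul_mem_smul (mem_ofList (List.mem_append_right _ (List.mem_singleton_self z))) hker)
    exact Submodule.smul_mono_left
      (Ideal.span_mono (fun b hb => List.mem_append_left _ hb)) hIH

lemma lemC {t : ℕ} : ∀ (rs : List S) {N : Type w} [AddCommGroup N] [Module S N],
    IsWeaklyRegular N rs → ∀ n : N,
      rs.prod ^ t • n ∈ (Ideal.ofList (rs.map (· ^ (t+1))) • ⊤ : Submodule S N) →
      n ∈ (Ideal.ofList rs • ⊤ : Submodule S N) := by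
  intro rs
  induction rs with
  | nil =>
    intro N _ _ _ n hn
    simpa using hn
  | cons z l ih =>
    intro N _ _ h n hn
    rcases Nat.eq_zero_or_pos t with ht | ht
    · subst ht
      simp only [pow_zero, one_smul, Nat.zero_add, pow_one] at hn
      simpa using hn
    obtain ⟨s, rfl⟩ : ∃ s, t = s + 1 := ⟨t - 1, (Nat.succ_pred_eq_of_pos ht).symm⟩
    rw [List.prod_cons, List.map_cons] at hn
    obtain ⟨c, hc⟩ := mem_cons_smul_iff.mp hn
    have h1 : z ^ (s+1) • (l.prod ^ (s+1) • n - z • c)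
        ∈ (Ideal.ofList (l.map (· ^ (s+1+1))) • ⊤ : Submodule S N) := by
      have e : z ^ (s+1) • (l.prod ^ (s+1) • n - z • c)
          = (z * l.prod) ^ (s+1) • n - z ^ (s+1+1) • c := by
        rw [smul_sub, ← mul_smul (z ^ (s+1)) z c, ← pow_succ,
          ← mul_smul (z ^ (s+1)) (l.prod ^ (s+1)) n, ← mul_pow]
      rw [e]; exact hc
    have hwrz : IsWeaklyRegular N (z ^ (s+1+1) :: l) := pow_first h (s+1)
    have hl1 : IsWeaklyRegular (N ⧸ (Ideal.ofList [z ^ (s+1+1)] • ⊤ : Submodule S N)) l := by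
      have := (isWeaklyRegular_append_iff N [z ^ (s+1+1)] l).mp (by simpa using hwrz)
      exact this.2
    have h4 : (Ideal.ofList [z ^ (s+1+1)] • ⊤ : Submodule S N).mkQ (z ^ (s+1) • (z • c)) = 0 := by
      rw [Submodule.mkQ_apply, Submodule.Quotient.mk_eq_zero]
      have e : z ^ (s+1) • (z • c) = z ^ (s+1+1) • c := by rw [← mul_smul, ← pow_succ]
      rw [e]
      exact Submodule.smul_mem_smul (mem_ofList (List.mem_singleton_self _)) Submodule.mem_top
    have h2 : l.prod ^ (s+1) •
        ((Ideal.ofList [z ^ (s+1+1)] • ⊤ : Submodule S N).mkQ (z ^ (s+1) • n))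
        ∈ (Ideal.ofList (l.map (· ^ (s+1+1))) • ⊤ :
            Submodule S (N ⧸ (Ideal.ofList [z ^ (s+1+1)] • ⊤ : Submodule S N))) := by
      have h3 := map_mem_smul_top ((Ideal.ofList [z ^ (s+1+1)] • ⊤ : Submodule S N).mkQ) h1
      have e1 : z ^ (s+1) • (l.prod ^ (s+1) • n)
          = z ^ (s+1) • (l.prod ^ (s+1) • n - z • c) + z ^ (s+1) • (z • c) := by
        rw [smul_sub]; abel
      have e2 : l.prod ^ (s+1) •
          ((Ideal.ofList [z ^ (s+1+1)] • ⊤ : Submodule S N).mkQ (z ^ (s+1) • n))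
          = (Ideal.ofList [z ^ (s+1+1)] • ⊤ : Submodule S N).mkQ
              (z ^ (s+1) • (l.prod ^ (s+1) • n - z • c)) := by
        rw [← map_smul, smul_comm (l.prod ^ (s+1)) (z ^ (s+1)) n, e1, map_add, h4, add_zero]
      rw [e2]; exact h3
    have h5 := ih hl1 _ h2
    have h6 : z ^ (s+1) • n ∈ (Ideal.ofList l • ⊤ : Submodule S N)
        ⊔ (Ideal.ofList [z ^ (s+1+1)] • ⊤ : Submodule S N) := mkQ_mem_smul_top_iff.mp h5
    obtain ⟨v, hv, k, hk, hvk⟩ := Submodule.mem_sup.mp h6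
    obtain ⟨c', hc'⟩ := mem_cons_smul_iff.mp hk
    have hkc : k = z ^ (s+1+1) • c' := by
      simp only [Ideal.ofList_nil, bot_smul, Submodule.mem_bot] at hc'
      exact sub_eq_zero.mp hc'
    have h7 : z ^ (s+1) • (n - z • c') ∈ (Ideal.ofList l • ⊤ : Submodule S N) := by
      have e3 : z ^ (s+1) • (n - z • c') = v := by
        rw [smul_sub, ← mul_smul (z ^ (s+1)) z c', ← pow_succ, ← hvk, hkc]; abel
      rw [e3]; exact hv
    have hwr2 : IsWeaklyRegular N (z ^ (s+1) :: l) := pow_first h s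
    have h8 := rel_first l hwr2 _ h7
    obtain ⟨e, he⟩ := mem_cons_smul_iff.mp h8
    refine mem_cons_smul_iff.mpr ⟨c' + z ^ s • e, ?_⟩
    have e4 : n - z • (c' + z ^ s • e) = (n - z • c') - z ^ (s+1) • e := by
      rw [smul_add, ← mul_smul z (z ^ s) e, ← pow_succ']; abel
    rw [e4]; exact he

end RegularHelpers

theorem annihilator_of_class_in_top_localCohomology
    {R : Type u} [CommRing R] (𝔓 : Ideal R) (h𝔓 : 𝔓 ≠ ⊤)
    (M : Type u) [AddCommGroup M] [Module R M] (u : M)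
    (hM : Pseudoflat 𝔓 M)
    (hMu : Pseudoflat 𝔓 (M ⧸ Submodule.span R {u}))
    (R' : Type u) [CommRing R'] [Algebra R R'] [Module.Flat R R']
    (d : ℕ) (y : Fin d → R')
    (hy : RingTheory.Sequence.IsWeaklyRegular
      (R' ⧸ 𝔓.map (algebraMap R R')) (List.ofFn y)) :
    ∀ r : R',
      (∃ t : ℕ, ((∏ i, y i) ^ t * r) • ((1 : R') ⊗ₜ[R] u : R' ⊗[R] M) ∈
          (Ideal.span (Set.range fun i => y i ^ (t + 1))) •
            (⊤ : Submodule R' (R' ⊗[R] M)))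
      ↔ r ∈ Ideal.map (algebraMap R R') ((Submodule.span R {u}).annihilator) ⊔
            Ideal.span (Set.range y) := by
  intro r
  -- the map g : R' → R' ⊗ M, r ↦ r ⊗ u
  set g : R' →ₗ[R'] R' ⊗[R] M :=
    LinearMap.toSpanSingleton R' (R' ⊗[R] M) ((1 : R') ⊗ₜ[R] u) with hgdef
  have hgr : ∀ s : R', g s = s • ((1 : R') ⊗ₜ[R] u) := fun s =>
    LinearMap.toSpanSingleton_apply R' (R' ⊗[R] M) ((1 : R') ⊗ₜ[R] u) s
  have hg : ∀ s : R', g s = s ⊗ₜ[R] u := by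
    intro s
    rw [hgr, TensorProduct.smul_tmul', smul_eq_mul, mul_one]
  -- easy inclusion for the kernel of g
  have hIker : Ideal.map (algebraMap R R') ((Submodule.span R {u}).annihilator)
      ≤ LinearMap.ker g := by
    rw [Ideal.map_le_iff_le_comap]
    intro a ha
    rw [Ideal.mem_comap, LinearMap.mem_ker, hg, Algebra.algebraMap_eq_smul_one,
      TensorProduct.smul_tmul,
      Submodule.mem_annihilator.mp ha u (Submodule.mem_span_singleton_self u),
      TensorProduct.tmul_zero]
  -- kernel of g computation (uses flatness)
  have hkerg : LinearMap.ker g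
      = Ideal.map (algebraMap R R') ((Submodule.span R {u}).annihilator) := by
    refine le_antisymm ?_ hIker
    intro s hs
    rw [LinearMap.mem_ker, hg] at hs
    set I := (Submodule.span R {u}).annihilator with hIdef
    have hIle : I ≤ LinearMap.ker (LinearMap.toSpanSingleton R M u) := by
      intro a ha
      rw [LinearMap.mem_ker, LinearMap.toSpanSingleton_apply]
      exact Submodule.mem_annihilator.mp ha u (Submodule.mem_span_singleton_self u)
    set ψ : (R ⧸ I) →ₗ[R] M := Submodule.liftQ I (LinearMap.toSpanSingleton R M u) hIle
      with hψdef
    have hψ : Function.Injective ψ := by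
      rw [← LinearMap.ker_eq_bot]
      apply Submodule.ker_liftQ_eq_bot
      intro a ha
      rw [LinearMap.mem_ker, LinearMap.toSpanSingleton_apply] at ha
      rw [Submodule.mem_annihilator]
      intro n hn
      obtain ⟨c, rfl⟩ := Submodule.mem_span_singleton.mp hn
      rw [smul_comm, ha, smul_zero]
    have hinj : Function.Injective (ψ.lTensor R') :=
      Module.Flat.lTensor_preserves_injective_linearMap ψ hψ
    have hψ1 : ψ (Submodule.Quotient.mk (1 : R)) = u := by
      rw [hψdef]
      rw [show (Submodule.Quotient.mk (1:R) : R ⧸ I) = Submodule.mkQ I 1 from rfl,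
        ← LinearMap.comp_apply, Submodule.liftQ_mkQ]
      rw [LinearMap.toSpanSingleton_apply, one_smul]
    have h1 : (ψ.lTensor R') (s ⊗ₜ[R] (Submodule.Quotient.mk (1 : R))) = 0 := by
      rw [LinearMap.lTensor_tmul, hψ1]
      exact hs
    have h2 : (s ⊗ₜ[R] (Submodule.Quotient.mk (1 : R)) : R' ⊗[R] (R ⧸ I)) = 0 := by
      apply hinj
      rw [h1, map_zero]
    have h3 := congrArg (TensorProduct.tensorQuotEquivQuotSMul R' I) h2
    rw [map_zero] at h3
    rw [show (Submodule.Quotient.mk (1 : R) : R ⧸ I) = Ideal.Quotient.mk I 1 from rfl,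
      TensorProduct.tensorQuotEquivQuotSMul_tmul_mk, one_smul] at h3
    have h4 : s ∈ (I • ⊤ : Submodule R R') := by
      rwa [← Submodule.Quotient.mk_eq_zero]
    rw [Ideal.smul_top_eq_map] at h4
    exact h4
  -- the base-changed projection π
  set π : (R' ⊗[R] M) →ₗ[R'] (R' ⊗[R] (M ⧸ Submodule.span R {u})) :=
    LinearMap.baseChange R' (Submodule.span R {u}).mkQ with hπdef
  have hcoe : ∀ x, π x = ((Submodule.span R {u}).mkQ.lTensor R') x := by
    intro x
    rw [hπdef]
    exact congrFun (LinearMap.baseChange_eq_ltensor (f := (Submodule.span R {u}).mkQ)) x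
  have hπsurj : Function.Surjective π := by
    intro x
    obtain ⟨w, hw⟩ := LinearMap.lTensor_surjective R'
      (Submodule.mkQ_surjective (Submodule.span R {u})) x
    exact ⟨w, by rw [hcoe]; exact hw⟩
  have hu0 : (Submodule.span R {u}).mkQ u = 0 := by
    rw [Submodule.mkQ_apply, Submodule.Quotient.mk_eq_zero]
    exact Submodule.mem_span_singleton_self u
  have hrange_ker : LinearMap.ker π = LinearMap.range g := by
    apply le_antisymm
    · intro x hx
      have hx0 : ((Submodule.span R {u}).mkQ.lTensor R') x = 0 := by
        rw [← hcoe]; exact LinearMap.mem_ker.mp hx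
      have hexact : x ∈ LinearMap.range ((Submodule.span R {u}).subtype.lTensor R') := by
        rw [← lTensor_mkQ (Q := R') (Submodule.span R {u})]
        exact hx0
      obtain ⟨w, rfl⟩ := hexact
      clear hx hx0
      induction w using TensorProduct.induction_on with
      | zero => rw [map_zero]; exact Submodule.zero_mem _
      | tmul s v =>
        obtain ⟨c, hc⟩ := Submodule.mem_span_singleton.mp v.2
        refine ⟨c • s, ?_⟩
        rw [hg, LinearMap.lTensor_tmul, Submodule.coe_subtype, ← hc,
          TensorProduct.smul_tmul]
      | add a b ha hb =>
        rw [map_add]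
        exact Submodule.add_mem _ ha hb
    · rintro x ⟨s, rfl⟩
      rw [LinearMap.mem_ker, hg, hπdef, LinearMap.baseChange_tmul, hu0,
        TensorProduct.tmul_zero]
  -- ideal identifications
  have hIdeq0 : Ideal.ofList (List.ofFn y) = Ideal.span (Set.range y) := by
    apply congrArg Ideal.span
    ext a
    simp [List.mem_ofFn]
  constructor
  · rintro ⟨t, ht⟩
    have hIdeq : Ideal.ofList ((List.ofFn y).map (· ^ (t+1)))
        = Ideal.span (Set.range fun i => y i ^ (t + 1)) := by
      rw [List.map_ofFn]
      apply congrArg Ideal.span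
      ext a
      simp [List.mem_ofFn, Function.comp]
    have hNwr : RingTheory.Sequence.IsWeaklyRegular (R' ⊗[R] M) (List.ofFn y) :=
      hM R' inferInstance (List.ofFn y) hy
    have hQwr : RingTheory.Sequence.IsWeaklyRegular
        (R' ⊗[R] (M ⧸ Submodule.span R {u})) (List.ofFn y) :=
      hMu R' inferInstance (List.ofFn y) hy
    have ht' : (List.ofFn y).prod ^ t • (r • ((1 : R') ⊗ₜ[R] u : R' ⊗[R] M))
        ∈ (Ideal.ofList ((List.ofFn y).map (· ^ (t+1))) • ⊤ :
            Submodule R' (R' ⊗[R] M)) := by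
      rw [hIdeq, List.prod_ofFn, smul_smul]
      exact ht
    have h4 := lemC (List.ofFn y) hNwr _ ht'
    have h5 : π (r • ((1 : R') ⊗ₜ[R] u)) = 0 := by
      rw [← hgr]
      have : g r ∈ LinearMap.ker π := hrange_ker ▸ LinearMap.mem_range_self g r
      exact LinearMap.mem_ker.mp this
    have h6 := lemA (List.ofFn y) π hπsurj hQwr _ h5 h4
    rw [hrange_ker] at h6
    have h7 : ∃ s, s ∈ Ideal.ofList (List.ofFn y) ∧ g s = r • ((1 : R') ⊗ₜ[R] u) := by
      refine Submodule.smul_induction_on h6 ?_ ?_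
      · intro cc hcc x hx
        obtain ⟨s, rfl⟩ := hx
        exact ⟨cc • s, by rw [smul_eq_mul]; exact Ideal.mul_mem_right s _ hcc,
          by rw [map_smul]⟩
      · rintro x x' ⟨s, hsmem, hseq⟩ ⟨s', hsmem', hseq'⟩
        exact ⟨s + s', Submodule.add_mem _ hsmem hsmem', by rw [map_add, hseq, hseq']⟩
    obtain ⟨s, hsI, hgs⟩ := h7
    have hker_rs : r - s ∈ Ideal.map (algebraMap R R') ((Submodule.span R {u}).annihilator) := by
      rw [← hkerg, LinearMap.mem_ker, map_sub, hgs, hgr, sub_self]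
    have hsY : s ∈ Ideal.span (Set.range y) := hIdeq0 ▸ hsI
    have hrr : r = (r - s) + s := by ring
    rw [hrr]
    exact Submodule.add_mem _ (Submodule.mem_sup_left hker_rs) (Submodule.mem_sup_right hsY)
  · intro hr
    refine ⟨0, ?_⟩
    rw [pow_zero, one_mul]
    obtain ⟨p, hp, s, hs, rfl⟩ := Submodule.mem_sup.mp hr
    rw [add_smul]
    have hspan1 : Ideal.span (Set.range fun i => y i ^ (0 + 1)) = Ideal.span (Set.range y) := by
      apply congrArg Ideal.span
      ext a
      simp
    refine Submodule.add_mem _ ?_ ?_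
    · have hp0 : p • ((1 : R') ⊗ₜ[R] u : R' ⊗[R] M) = 0 := by
        rw [← hgr]
        exact LinearMap.mem_ker.mp (hIker hp)
      rw [hp0]
      exact Submodule.zero_mem _
    · rw [hspan1]
      exact Submodule.smul_mem_smul hs Submodule.mem_top
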